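/- The projection of the LP relaxation P of the ideal non-extended formulation onto the (x, y) variables equals the convex hull of the graph of the ReLU neuron: {(x, y) : ∃ z, 0 ≤ z ≤ 1 ∧ (x, y, z) ∈ P} = convexHull ℝ gr. -/

import Mathlib

open Finset

/-- The affine function `f(x) = w · x + b`. -/
noncomputable def fAff {η : ℕ} (w : Fin η → ℝ) (b : ℝ) (x : Fin η → ℝ) : ℝ :=
  (∑ i, w i * x i) + b

/-- The rectified linear unit. -/
noncomputable def ReLU (v : ℝ) : ℝ := max 0 v

/-- The box `[L, U]`. -/
def Box {η : ℕ} (L U : Fin η → ℝ) : Set (Fin η → ℝ) :=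
  {x | ∀ i, L i ≤ x i ∧ x i ≤ U i}

/-- `L̆ i`. -/
noncomputable def Lbreve {η : ℕ} (w L U : Fin η → ℝ) (i : Fin η) : ℝ :=
  if 0 ≤ w i then L i else U i

/-- `Ŭ i`. -/
noncomputable def Ubreve {η : ℕ} (w L U : Fin η → ℝ) (i : Fin η) : ℝ :=
  if 0 ≤ w i then U i else L i

/-- The graph of the ReLU neuron over the box. -/
noncomputable def grSet {η : ℕ} (w : Fin η → ℝ) (b : ℝ) (L U : Fin η → ℝ) :
    Set ((Fin η → ℝ) × ℝ) :=
  {p | ∃ x ∈ Box L U, p = (x, ReLU (fAff w b x))}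

/-- The LP relaxation `P` of the ideal non-extended formulation. A point is
`(x, y, z)` with `x = p.1`, `y = p.2.1`, `z = p.2.2`. -/
noncomputable def Pset {η : ℕ} (w : Fin η → ℝ) (b : ℝ) (L U : Fin η → ℝ) :
    Set ((Fin η → ℝ) × ℝ × ℝ) :=
  {p | p.1 ∈ Box L U ∧ 0 ≤ p.2.1 ∧ 0 ≤ p.2.2 ∧ p.2.2 ≤ 1 ∧ fAff w b p.1 ≤ p.2.1 ∧
    ∀ I : Finset (Fin η), (∀ i ∈ I, w i ≠ 0) →
      p.2.1 ≤ (∑ i ∈ I, w i * (p.1 i - Lbreve w L U i * (1 - p.2.2)))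
        + (b + ∑ i ∈ Iᶜ, w i * Ubreve w L U i) * p.2.2}

/-- The LP relaxation `R` of the big-`M` formulation. -/
noncomputable def Rset {η : ℕ} (w : Fin η → ℝ) (b : ℝ) (L U : Fin η → ℝ) :
    Set ((Fin η → ℝ) × ℝ × ℝ) :=
  {p | p.1 ∈ Box L U ∧ 0 ≤ p.2.1 ∧ 0 ≤ p.2.2 ∧ p.2.2 ≤ 1 ∧ fAff w b p.1 ≤ p.2.1 ∧
    p.2.1 ≤ fAff w b p.1 - ((∑ i, w i * Lbreve w L U i) + b) * (1 - p.2.2) ∧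
    p.2.1 ≤ ((∑ i, w i * Ubreve w L U i) + b) * p.2.2}

/-- The LP relaxation `Q` of the multiple-choice extended formulation. A point is
`(x, y, z, x⁰, x¹, y⁰, y¹)`. -/
noncomputable def Qset {η : ℕ} (w : Fin η → ℝ) (b : ℝ) (L U : Fin η → ℝ) :
    Set ((Fin η → ℝ) × ℝ × ℝ × (Fin η → ℝ) × (Fin η → ℝ) × ℝ × ℝ) :=
  {q | match q with
    | (x, y, z, x0, x1, y0, y1) =>
      x = x0 + x1 ∧ y = y0 + y1 ∧ y0 = 0 ∧
      (∑ i, w i * x0 i) + b * (1 - z) ≤ 0 ∧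
      y1 = (∑ i, w i * x1 i) + b * z ∧ 0 ≤ y1 ∧
      (∀ i, L i * (1 - z) ≤ x0 i ∧ x0 i ≤ U i * (1 - z)) ∧
      (∀ i, L i * z ≤ x1 i ∧ x1 i ≤ U i * z) ∧
      0 ≤ z ∧ z ≤ 1}

section Aux
open Finset

/-- Split a linear combination inside a weighted sum. -/
lemma sum_comb {η : ℕ} (w xp xq : Fin η → ℝ) (a c : ℝ) (s : Finset (Fin η)) :
    ∑ i ∈ s, w i * (a * xp i + c * xq i)
      = a * ∑ i ∈ s, w i * xp i + c * ∑ i ∈ s, w i * xq i := by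
  rw [Finset.mul_sum, Finset.mul_sum, ← Finset.sum_add_distrib]
  exact Finset.sum_congr rfl fun i _ => by ring

lemma gr_subset_proj {η : ℕ} (w : Fin η → ℝ) (b : ℝ) (L U : Fin η → ℝ) :
    grSet w b L U ⊆
      {p : (Fin η → ℝ) × ℝ |
        ∃ z : ℝ, 0 ≤ z ∧ z ≤ 1 ∧ (p.1, p.2, z) ∈ Pset w b L U} := by
  rintro p ⟨x, hx, rfl⟩
  rcases le_total (fAff w b x) 0 with hf | hf
  · -- inactive neuron : z = 0
    have hrelu : ReLU (fAff w b x) = 0 := max_eq_left hf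
    refine ⟨0, le_refl _, zero_le_one, hx, by rw [hrelu], le_refl _, zero_le_one,
      by rw [hrelu]; exact hf, ?_⟩
    intro I hI
    simp only [mul_zero, sub_zero, mul_one, add_zero, hrelu]
    apply Finset.sum_nonneg
    intro i _
    unfold Lbreve
    rcases le_or_gt 0 (w i) with hw | hw
    · rw [if_pos hw]; exact mul_nonneg hw (by linarith [(hx i).1])
    · rw [if_neg (not_le.2 hw)]
      nlinarith [mul_nonneg (by linarith : (0:ℝ) ≤ -w i) (by linarith [(hx i).2] : (0:ℝ) ≤ U i - x i)]
  · -- active neuron : z = 1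
    have hrelu : ReLU (fAff w b x) = fAff w b x := max_eq_right hf
    refine ⟨1, zero_le_one, le_refl _, hx, by rw [hrelu]; exact hf, zero_le_one, le_refl _,
      by rw [hrelu], ?_⟩
    intro I hI
    simp only [hrelu, sub_self, mul_zero, sub_zero, mul_one]
    have hcompl : ∀ i ∈ Iᶜ, w i * x i ≤ w i * Ubreve w L U i := by
      intro i _
      unfold Ubreve
      rcases le_or_gt 0 (w i) with hw | hw
      · rw [if_pos hw]; exact mul_le_mul_of_nonneg_left (hx i).2 hw
      · rw [if_neg (not_le.2 hw)]
        exact mul_le_mul_of_nonpos_left (hx i).1 hw.le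
    have hsplit : ∑ i ∈ I, w i * x i + ∑ i ∈ Iᶜ, w i * x i = ∑ i, w i * x i :=
      Finset.sum_add_sum_compl I _
    have := Finset.sum_le_sum hcompl
    unfold fAff
    linarith

lemma proj_convex {η : ℕ} (w : Fin η → ℝ) (b : ℝ) (L U : Fin η → ℝ) :
    Convex ℝ {p : (Fin η → ℝ) × ℝ |
        ∃ z : ℝ, 0 ≤ z ∧ z ≤ 1 ∧ (p.1, p.2, z) ∈ Pset w b L U} := by
  rintro ⟨xp, yp⟩ ⟨zp, hzp0, hzp1, hbp, hyp0, -, -, hfp, hIp⟩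
    ⟨xq, yq⟩ ⟨zq, hzq0, hzq1, hbq, hyq0, -, -, hfq, hIq⟩ a c ha hc hac
  dsimp only at hbp hyp0 hfp hIp hbq hyq0 hfq hIq
  obtain rfl : c = 1 - a := by linarith
  have hpt : a • ((xp, yp) : (Fin η → ℝ) × ℝ) + (1 - a) • (xq, yq)
      = (a • xp + (1 - a) • xq, a * yp + (1 - a) * yq) := by
    simp [Prod.ext_iff, smul_eq_mul]
  rw [hpt]
  have hz0' : (0:ℝ) ≤ a * zp + (1 - a) * zq := by positivity
  have hz1' : a * zp + (1 - a) * zq ≤ 1 := by nlinarith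
  refine ⟨a * zp + (1 - a) * zq, hz0', hz1', ?_⟩
  show (a • xp + (1 - a) • xq) ∈ Box L U ∧ 0 ≤ a * yp + (1 - a) * yq
    ∧ 0 ≤ a * zp + (1 - a) * zq ∧ a * zp + (1 - a) * zq ≤ 1
    ∧ fAff w b (a • xp + (1 - a) • xq) ≤ a * yp + (1 - a) * yq
    ∧ ∀ I : Finset (Fin η), (∀ i ∈ I, w i ≠ 0) →
      a * yp + (1 - a) * yq ≤
        (∑ i ∈ I, w i * ((a • xp + (1 - a) • xq) i
          - Lbreve w L U i * (1 - (a * zp + (1 - a) * zq))))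
        + (b + ∑ i ∈ Iᶜ, w i * Ubreve w L U i) * (a * zp + (1 - a) * zq)
  refine ⟨?_, by positivity, hz0', hz1', ?_, ?_⟩
  · intro i
    have h1 := (hbp i).1; have h2 := (hbp i).2
    have h3 := (hbq i).1; have h4 := (hbq i).2
    simp only [Pi.add_apply, Pi.smul_apply, smul_eq_mul]
    constructor <;> nlinarith [mul_nonneg ha (sub_nonneg.2 h1),
      mul_nonneg hc (sub_nonneg.2 h3), mul_nonneg ha (sub_nonneg.2 h2),
      mul_nonneg hc (sub_nonneg.2 h4)]
  · unfold fAff at *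
    have heq : ∑ i, w i * (a • xp + (1 - a) • xq) i
        = a * ∑ i, w i * xp i + (1 - a) * ∑ i, w i * xq i := by
      rw [Finset.mul_sum, Finset.mul_sum, ← Finset.sum_add_distrib]
      refine Finset.sum_congr rfl fun i _ => ?_
      simp only [Pi.add_apply, Pi.smul_apply, smul_eq_mul]; ring
    rw [heq]
    nlinarith [mul_le_mul_of_nonneg_left hfp ha, mul_le_mul_of_nonneg_left hfq hc]
  · intro I hI
    have hp := hIp I hI
    have hq := hIq I hI
    have hsum : ∑ i ∈ I, w i * ((a • xp + (1 - a) • xq) i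
          - Lbreve w L U i * (1 - (a * zp + (1 - a) * zq)))
        = a * ∑ i ∈ I, w i * (xp i - Lbreve w L U i * (1 - zp))
          + (1 - a) * ∑ i ∈ I, w i * (xq i - Lbreve w L U i * (1 - zq)) := by
      rw [Finset.mul_sum, Finset.mul_sum, ← Finset.sum_add_distrib]
      refine Finset.sum_congr rfl fun i _ => ?_
      simp only [Pi.add_apply, Pi.smul_apply, smul_eq_mul]; ring
    rw [hsum]
    nlinarith [mul_le_mul_of_nonneg_left hp ha, mul_le_mul_of_nonneg_left hq hc]

end Aux

section Hard
open Finset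

set_option maxHeartbeats 1000000 in
lemma proj_subset_hull {η : ℕ} (w : Fin η → ℝ) (b : ℝ) (L U : Fin η → ℝ)
    (hLU : ∀ i, L i < U i) :
    {p : (Fin η → ℝ) × ℝ |
        ∃ z : ℝ, 0 ≤ z ∧ z ≤ 1 ∧ (p.1, p.2, z) ∈ Pset w b L U}
      ⊆ convexHull ℝ (grSet w b L U) := by
  rintro ⟨x, y⟩ ⟨z, hz0, hz1, hbox, hy0, -, -, hfy, hIneq⟩
  dsimp only at hbox hy0 hfy hIneq
  rcases eq_or_lt_of_le hz0 with hz0' | hz0'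
  · -- z = 0 : necessarily y = 0 and f x ≤ 0
    have h0 := hIneq ∅ (by simp)
    rw [← hz0'] at h0
    simp only [Finset.sum_empty, mul_zero, zero_add, add_zero] at h0
    have hy : y = 0 := le_antisymm h0 hy0
    have hf0 : fAff w b x ≤ 0 := by rw [hy] at hfy; exact hfy
    apply subset_convexHull
    exact ⟨x, hbox, by rw [hy, show ReLU (fAff w b x) = 0 from max_eq_left hf0]⟩
  rcases eq_or_lt_of_le hz1 with hz1' | hz1'
  · -- z = 1 : necessarily y = f x ≥ 0
    have h1 := hIneq (Finset.univ.filter (fun i => w i ≠ 0))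
      (fun i hi => (Finset.mem_filter.1 hi).2)
    rw [hz1'] at h1
    have e1 : ∑ i ∈ Finset.univ.filter (fun i => w i ≠ 0),
        w i * (x i - Lbreve w L U i * (1 - 1)) = ∑ i, w i * x i := by
      simp only [sub_self, mul_zero, sub_zero]
      exact Finset.sum_filter_of_ne (fun i _ h hw => h (by rw [hw, zero_mul]))
    have e2 : ∑ i ∈ (Finset.univ.filter (fun i => w i ≠ 0))ᶜ,
        w i * Ubreve w L U i = 0 := by
      refine Finset.sum_eq_zero fun i hi => ?_
      have : w i = 0 := by
        have := Finset.mem_compl.1 hi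
        simpa using this
      rw [this, zero_mul]
    rw [e1, e2, add_zero, mul_one] at h1
    have hyf : y = fAff w b x := le_antisymm (by unfold fAff; linarith) hfy
    apply subset_convexHull
    refine ⟨x, hbox, ?_⟩
    rw [hyf, show ReLU (fAff w b x) = fAff w b x from max_eq_right (by rw [← hyf]; exact hy0)]
  -- main case : 0 < z < 1
  have hz1n : (0:ℝ) < 1 - z := by linarith
  have hzne : z ≠ 0 := ne_of_gt hz0'
  have hz1ne : (1:ℝ) - z ≠ 0 := ne_of_gt hz1n
  set A : Fin η → ℝ := fun i => max (L i * z) (x i - U i * (1 - z)) with hA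
  set B : Fin η → ℝ := fun i => min (U i * z) (x i - L i * (1 - z)) with hB
  have hAB : ∀ i, A i ≤ B i := fun i => by
    have h1 := (hbox i).1; have h2 := (hbox i).2; have h3 := (hLU i).le
    simp only [hA, hB, max_le_iff, le_min_iff]
    refine ⟨⟨?_, ?_⟩, ?_, ?_⟩ <;> nlinarith
  have hAL : ∀ i, L i * z ≤ A i := fun i => le_max_left _ _
  have hAU : ∀ i, x i - U i * (1 - z) ≤ A i := fun i => le_max_right _ _
  have hBU : ∀ i, B i ≤ U i * z := fun i => min_le_left _ _
  have hBL : ∀ i, B i ≤ x i - L i * (1 - z) := fun i => min_le_right _ _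
  set u : Fin η → ℝ := fun i => if 0 ≤ w i then A i else B i with hu
  set v : Fin η → ℝ := fun i => if 0 ≤ w i then B i else A i with hv
  have huAB : ∀ i, A i ≤ u i ∧ u i ≤ B i := fun i => by
    simp only [hu]; split_ifs
    · exact ⟨le_rfl, hAB i⟩
    · exact ⟨hAB i, le_rfl⟩
  have hvAB : ∀ i, A i ≤ v i ∧ v i ≤ B i := fun i => by
    simp only [hv]; split_ifs
    · exact ⟨hAB i, le_rfl⟩
    · exact ⟨le_rfl, hAB i⟩
  set t : ℝ := y - b * z with ht
  -- lower bound : ∑ w u ≤ t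
  have hKey1 : ∀ i, w i * u i ≤ z * (w i * x i) := fun i => by
    have h1 := (hbox i).1; have h2 := (hbox i).2
    simp only [hu, hA, hB]
    split_ifs with hw
    · rcases max_cases (L i * z) (x i - U i * (1 - z)) with ⟨h, -⟩ | ⟨h, -⟩ <;> rw [h] <;>
        nlinarith [mul_nonneg (mul_nonneg hz0 hw) (sub_nonneg.2 h1),
          mul_nonneg (mul_nonneg hz1n.le hw) (sub_nonneg.2 h2)]
    · have hw' : w i ≤ 0 := (not_le.1 hw).le
      rcases min_cases (U i * z) (x i - L i * (1 - z)) with ⟨h, -⟩ | ⟨h, -⟩ <;> rw [h] <;>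
        nlinarith [mul_nonneg (mul_nonneg hz0 (neg_nonneg.2 hw')) (sub_nonneg.2 h2),
          mul_nonneg (mul_nonneg hz1n.le (neg_nonneg.2 hw')) (sub_nonneg.2 h1)]
  have hSmin : (∑ i, w i * u i) ≤ t := by
    have hle : (∑ i, w i * u i) ≤ ∑ i, z * (w i * x i) :=
      Finset.sum_le_sum fun i _ => hKey1 i
    rw [← Finset.mul_sum] at hle
    have hzf : z * ((∑ i, w i * x i) + b) ≤ z * y :=
      mul_le_mul_of_nonneg_left hfy hz0
    have hzy : z * y ≤ y := by nlinarith [mul_nonneg (sub_nonneg.2 hz1) hy0]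
    rw [ht]; nlinarith
  -- upper bound : t ≤ ∑ w v
  have hSmax : t ≤ ∑ i, w i * v i := by
    set I₀ : Finset (Fin η) := Finset.univ.filter
      (fun i => w i ≠ 0 ∧ w i * (x i - Lbreve w L U i * (1 - z)) ≤ w i * (Ubreve w L U i * z))
      with hI₀
    have hmem : ∀ i ∈ I₀, w i ≠ 0 := fun i hi => ((Finset.mem_filter.1 hi).2).1
    have h := hIneq I₀ hmem
    have e1 : ∀ i ∈ I₀, w i * v i = w i * (x i - Lbreve w L U i * (1 - z)) := by
      intro i hi
      obtain ⟨hw, hle⟩ := (Finset.mem_filter.1 hi).2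
      by_cases hw0 : 0 ≤ w i
      · have hpos : 0 < w i := lt_of_le_of_ne hw0 (Ne.symm hw)
        simp only [Lbreve, Ubreve, if_pos hw0] at hle
        have hxle : x i - L i * (1 - z) ≤ U i * z := (mul_le_mul_iff_right₀ hpos).1 hle
        simp only [hv, hB, Lbreve, if_pos hw0, min_eq_right hxle]
      · have hneg : 0 < -w i := by
          rcases lt_or_eq_of_le (not_le.1 hw0).le with h' | h'
          · linarith
          · exact absurd h' hw
        simp only [Lbreve, Ubreve, if_neg hw0] at hle
        have hxle : L i * z ≤ x i - U i * (1 - z) := by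
          have := (mul_le_mul_iff_right₀ hneg).1
            (show (-w i) * (L i * z) ≤ (-w i) * (x i - U i * (1 - z)) by nlinarith)
          exact this
        simp only [hv, hA, Lbreve, if_neg hw0, max_eq_right hxle]
    have e2 : ∀ i ∈ I₀ᶜ, w i * v i = w i * (Ubreve w L U i * z) := by
      intro i hi
      have hni := Finset.mem_compl.1 hi
      rw [hI₀] at hni
      simp only [Finset.mem_filter, Finset.mem_univ, true_and, not_and, not_le] at hni
      by_cases hw : w i = 0
      · rw [hw]; ring
      · have hgt := hni hw
        by_cases hw0 : 0 ≤ w i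
        · have hpos : 0 < w i := lt_of_le_of_ne hw0 (Ne.symm hw)
          simp only [Lbreve, Ubreve, if_pos hw0] at hgt
          have hxle : U i * z ≤ x i - L i * (1 - z) :=
            ((mul_le_mul_iff_right₀ hpos).1 hgt.le)
          simp only [hv, hB, Ubreve, if_pos hw0, min_eq_left hxle]
        · have hneg : 0 < -w i := by
            rcases lt_or_eq_of_le (not_le.1 hw0).le with h' | h'
            · linarith
            · exact absurd h' hw
          simp only [Lbreve, Ubreve, if_neg hw0] at hgt
          have hxle : x i - U i * (1 - z) ≤ L i * z := by
            have := (mul_le_mul_iff_right₀ hneg).1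
              (show (-w i) * (x i - U i * (1 - z)) ≤ (-w i) * (L i * z) by nlinarith)
            exact this
          simp only [hv, hA, Ubreve, if_neg hw0, max_eq_left hxle]
    have hsplit : ∑ i, w i * v i
        = (∑ i ∈ I₀, w i * (x i - Lbreve w L U i * (1 - z)))
          + ∑ i ∈ I₀ᶜ, w i * (Ubreve w L U i * z) := by
      rw [← Finset.sum_add_sum_compl I₀ (fun i => w i * v i)]
      exact congrArg₂ (· + ·) (Finset.sum_congr rfl e1) (Finset.sum_congr rfl e2)
    have e3 : (b + ∑ i ∈ I₀ᶜ, w i * Ubreve w L U i) * z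
        = b * z + ∑ i ∈ I₀ᶜ, w i * (Ubreve w L U i * z) := by
      rw [add_mul, Finset.sum_mul]
      congr 1
      exact Finset.sum_congr rfl fun i _ => by ring
    rw [e3] at h
    rw [hsplit, ht]
    linarith
  -- the interpolation parameter
  set Smin : ℝ := ∑ i, w i * u i with hSminDef
  set Smax : ℝ := ∑ i, w i * v i with hSmaxDef
  set θ : ℝ := if Smax - Smin = 0 then 0 else (t - Smin) / (Smax - Smin) with hθ
  have hθ01 : 0 ≤ θ ∧ θ ≤ 1 := by
    rw [hθ]; split_ifs with h
    · exact ⟨le_rfl, zero_le_one⟩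
    · have hlt : 0 < Smax - Smin := lt_of_le_of_ne (by linarith) (Ne.symm h)
      exact ⟨div_nonneg (by linarith) hlt.le, by rw [div_le_one hlt]; linarith⟩
  obtain ⟨hθa, hθb⟩ := hθ01
  set xs : Fin η → ℝ := fun i => u i + θ * (v i - u i) with hxs
  have hsum1 : ∑ i, w i * xs i = t := by
    have hc : ∑ i, w i * xs i = Smin + θ * (Smax - Smin) := by
      calc ∑ i, w i * xs i
          = ∑ i, (w i * u i + θ * (w i * v i - w i * u i)) :=
            Finset.sum_congr rfl fun i _ => by simp only [hxs]; ring
        _ = Smin + θ * (Smax - Smin) := by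
            rw [Finset.sum_add_distrib, ← Finset.mul_sum, Finset.sum_sub_distrib]
    rw [hc, hθ]; split_ifs with h
    · linarith
    · rw [div_mul_cancel₀ _ h]; ring
  have hxsAB : ∀ i, A i ≤ xs i ∧ xs i ≤ B i := fun i => by
    obtain ⟨hu1, hu2⟩ := huAB i; obtain ⟨hv1, hv2⟩ := hvAB i
    constructor <;> simp only [hxs] <;>
      nlinarith [mul_nonneg hθa (sub_nonneg.2 hv1), mul_nonneg hθa (sub_nonneg.2 hv2),
        mul_nonneg (sub_nonneg.2 hθb) (sub_nonneg.2 hu1),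
        mul_nonneg (sub_nonneg.2 hθb) (sub_nonneg.2 hu2),
        mul_le_mul_of_nonneg_left hv2 hθa, mul_le_mul_of_nonneg_left hv1 hθa]
  -- the two endpoints
  set x0f : Fin η → ℝ := fun i => (x i - xs i) / (1 - z) with hx0f
  set x1f : Fin η → ℝ := fun i => xs i / z with hx1f
  have hb0 : x0f ∈ Box L U := by
    intro i
    obtain ⟨h1, h2⟩ := hxsAB i
    constructor
    · rw [hx0f]; dsimp only
      rw [le_div_iff₀ hz1n]
      have := hBL i; linarith
    · rw [hx0f]; dsimp only
      rw [div_le_iff₀ hz1n]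
      have := hAU i; linarith
  have hb1 : x1f ∈ Box L U := by
    intro i
    obtain ⟨h1, h2⟩ := hxsAB i
    constructor
    · rw [hx1f]; dsimp only
      rw [le_div_iff₀ hz0']
      have := hAL i; linarith
    · rw [hx1f]; dsimp only
      rw [div_le_iff₀ hz0']
      have := hBU i; linarith
  have hsum0 : ∑ i, w i * x0f i = ((∑ i, w i * x i) - t) / (1 - z) := by
    rw [eq_div_iff hz1ne, Finset.sum_mul, ← hsum1, ← Finset.sum_sub_distrib]
    refine Finset.sum_congr rfl fun i _ => ?_
    rw [hx0f]; dsimp only; rw [mul_assoc, div_mul_cancel₀ _ hz1ne]; ring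
  have hsum1' : ∑ i, w i * x1f i = t / z := by
    rw [eq_div_iff hzne, Finset.sum_mul, ← hsum1]
    refine Finset.sum_congr rfl fun i _ => ?_
    rw [hx1f]; dsimp only; rw [mul_assoc, div_mul_cancel₀ _ hzne]
  have hf0 : fAff w b x0f ≤ 0 := by
    unfold fAff
    rw [hsum0]
    have hnum : ((∑ i, w i * x i) - t) / (1 - z) + b
        = ((∑ i, w i * x i) + b - y) / (1 - z) := by
      rw [ht, eq_div_iff hz1ne, add_mul, div_mul_cancel₀ _ hz1ne]; ring
    rw [hnum]
    apply div_nonpos_of_nonpos_of_nonneg _ hz1n.le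
    unfold fAff at hfy; linarith
  have hf1 : fAff w b x1f = y / z := by
    unfold fAff
    rw [hsum1', ht, eq_div_iff hzne, add_mul, div_mul_cancel₀ _ hzne]
    ring
  have hg0 : ((x0f, 0) : (Fin η → ℝ) × ℝ) ∈ grSet w b L U :=
    ⟨x0f, hb0, by rw [show ReLU (fAff w b x0f) = 0 from max_eq_left hf0]⟩
  have hg1 : ((x1f, y / z) : (Fin η → ℝ) × ℝ) ∈ grSet w b L U :=
    ⟨x1f, hb1, by
      rw [show ReLU (fAff w b x1f) = y / z from by
        rw [ReLU, hf1]; exact max_eq_right (div_nonneg hy0 hz0'.le)]⟩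
  have hdecomp : ((x, y) : (Fin η → ℝ) × ℝ)
      = (1 - z) • ((x0f, 0) : (Fin η → ℝ) × ℝ) + z • (x1f, y / z) := by
    rw [Prod.ext_iff]
    constructor
    · funext i
      simp only [Prod.fst_add, Prod.smul_fst, Pi.add_apply, Pi.smul_apply, smul_eq_mul,
        hx0f, hx1f]
      rw [mul_comm ((1:ℝ) - z), mul_comm z, div_mul_cancel₀ _ hz1ne, div_mul_cancel₀ _ hzne]
      ring
    · simp only [Prod.snd_add, Prod.smul_snd, smul_eq_mul]
      field_simp
      ring
  rw [hdecomp]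
  exact (convex_convexHull ℝ _) (subset_convexHull _ _ hg0) (subset_convexHull _ _ hg1)
    (by linarith) hz0 (by ring)

end Hard


/-- The projection of `P` onto the `(x, y)` variables is the convex hull of the graph
of the ReLU neuron. -/
theorem projection_eq_convexHull {η : ℕ} (w : Fin η → ℝ) (b : ℝ) (L U : Fin η → ℝ)
    (hLU : ∀ i, L i < U i) :
    {p : (Fin η → ℝ) × ℝ |
        ∃ z : ℝ, 0 ≤ z ∧ z ≤ 1 ∧ (p.1, p.2, z) ∈ Pset w b L U}
      = convexHull ℝ (grSet w b L U) := by
  exact Set.Subset.antisymm (proj_subset_hull w b L U hLU)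
    (convexHull_min (gr_subset_proj w b L U) (proj_convex w b L U))
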